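/- For κ = (3,3,3) and Λ = [[0,−2,2],[−2,0,2],[2,2,0]], the matrix P = diag(3,3,3) − Λ is positive definite (its eigenvalues are 1, 1, 7), but the matrix diag(3,3,3) + Λ is not positive semidefinite (its eigenvalues are −1, 5, 5). Consequently the hypothesis of the proposition on positive definiteness of P can hold while the Hessian of f at θ = (μ₁+π, μ₂+π, μ₃+π), which equals diag(κ) + Λ, is not positive semidefinite, so the minimum of the MVM density need not be at (μ₁+π, …, μ_p+π) under that hypothesis alone. -/

import Mathlib

open Real

/-- Counterexample: for `κ = (3,3,3)` and `Λ = [[0,-2,2],[-2,0,2],[2,2,0]]`,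
the matrix `P = diag κ - Λ` is positive definite, but `diag κ + Λ` — which is the
Hessian of `f` at `θ = μ + (π, π, π)` — is not positive semidefinite.  Hence under
the positive-definiteness hypothesis alone, the minimum of the MVM density need
not be at `μ + (π, …, π)`. -/
theorem stmt_15 (κ : Fin 3 → ℝ) (hκ : κ = ![3, 3, 3])
    (Λ : Matrix (Fin 3) (Fin 3) ℝ)
    (hΛ : Λ = !![0, -2, 2; -2, 0, 2; 2, 2, 0]) :
    (Matrix.diagonal κ - Λ).PosDef ∧ ¬ (Matrix.diagonal κ + Λ).PosSemidef := by
  subst hκ hΛ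
  have hP : Matrix.diagonal ![(3:ℝ), 3, 3] - !![0, -2, 2; -2, 0, 2; 2, 2, 0]
      = !![3, 2, -2; 2, 3, -2; -2, -2, 3] := by
    ext i j
    fin_cases i <;> fin_cases j <;>
      simp [Matrix.diagonal, Matrix.sub_apply]
  have hQ : Matrix.diagonal ![(3:ℝ), 3, 3] + !![0, -2, 2; -2, 0, 2; 2, 2, 0]
      = !![3, -2, 2; -2, 3, 2; 2, 2, 3] := by
    ext i j
    fin_cases i <;> fin_cases j <;>
      simp [Matrix.diagonal, Matrix.add_apply]
  rw [hP, hQ]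
  constructor
  · rw [Matrix.posDef_iff_dotProduct_mulVec]
    constructor
    · ext i j
      fin_cases i <;> fin_cases j <;> rfl
    · intro x hx
      obtain ⟨i, hi⟩ := Function.ne_iff.mp hx
      simp only [Pi.zero_apply] at hi
      have h1 : 0 < (x i)^2 := by
        rw [← sq_abs]; exact pow_pos (abs_pos.mpr hi) 2
      have key : (0:ℝ) < (x 0)^2 + (x 1)^2 + (x 2)^2 := by
        have h1' : 0 < x 0 ^ 2 ∨ 0 < x 1 ^ 2 ∨ 0 < x 2 ^ 2 := by
          fin_cases i
          · exact Or.inl h1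
          · exact Or.inr (Or.inl h1)
          · exact Or.inr (Or.inr h1)
        rcases h1' with h | h | h <;>
          nlinarith [sq_nonneg (x 0), sq_nonneg (x 1), sq_nonneg (x 2)]
      simp [Matrix.mulVec, dotProduct, Fin.sum_univ_three]
      nlinarith [sq_nonneg (x 0 + x 1 - x 2), key]
  · intro h
    have := (Matrix.posSemidef_iff_dotProduct_mulVec.mp h).2 ![1, 1, -1]
    simp [Matrix.mulVec, dotProduct, Fin.sum_univ_three] at this
    norm_num at this
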